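/- Let u : ℝ² → ℝ be twice continuously differentiable and let x ∈ ℝ². Then (8/(π·δ⁴))·∫_{{y : ‖y−x‖ ≤ δ}} (u(y) − u(x)) dy tends to Δu(x) = ∂²u/∂x₁²(x) + ∂²u/∂x₂²(x) as δ → 0⁺. Equivalently, the nonlocal Laplacian L_δ u(x) = 2·∫_{ℝ²} γ_{2,c}(x,y)·(u(y) − u(x)) dy with constant two-dimensional kernel γ_{2,c}(x,y) = 4/(π·δ⁴) for ‖y − x‖ ≤ δ and 0 otherwise converges to the local Laplacian Δu(x) in the limit of vanishing horizon. -/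

import Mathlib

open MeasureTheory Filter Real

noncomputable section NLapAux

namespace NLapAux

local notation "E2" => EuclideanSpace ℝ (Fin 2)

lemma setIntegral_comp_isometry (σ : E2 ≃ₗᵢ[ℝ] E2) (g : E2 → ℝ) (δ : ℝ) :
    ∫ k in Metric.closedBall (0 : E2) δ, g (σ k) =
      ∫ k in Metric.closedBall (0 : E2) δ, g k := by
  have h1 : σ ⁻¹' Metric.closedBall (0 : E2) δ = Metric.closedBall (0 : E2) δ := by
    rw [σ.preimage_closedBall, map_zero]
  conv_rhs => rw [← σ.measurePreserving.setIntegral_preimage_emb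
    σ.toHomeomorph.measurableEmbedding g]
  rw [h1]

/-- reflection negating the 0-th coordinate -/
def refl0 : E2 ≃ₗᵢ[ℝ] E2 :=
  LinearIsometryEquiv.piLpCongrRight 2
    (fun i : Fin 2 => if i = 0 then LinearIsometryEquiv.neg ℝ else .refl ℝ ℝ)

lemma refl0_apply_zero (k : E2) : refl0 k 0 = -(k 0) := by
  simp [refl0]

lemma refl0_apply_one (k : E2) : refl0 k 1 = k 1 := by
  simp [refl0]

/-- coordinate swap -/
def swap01 : E2 ≃ₗᵢ[ℝ] E2 :=
  LinearIsometryEquiv.piLpCongrLeft 2 ℝ ℝ (Equiv.swap (0 : Fin 2) 1)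

lemma swap01_apply_zero (k : E2) : swap01 k 0 = k 1 := by
  simp [swap01, Equiv.piCongrLeft'_apply, Equiv.swap_apply_def]

lemma swap01_apply_one (k : E2) : swap01 k 1 = k 0 := by
  simp [swap01, Equiv.piCongrLeft'_apply, Equiv.swap_apply_def]

lemma contin_apply (i : Fin 2) : Continuous fun k : E2 => k i :=
  (EuclideanSpace.proj (𝕜 := ℝ) i).continuous

lemma integrableOn_ball {g : E2 → ℝ} (hg : Continuous g) (δ : ℝ) :
    IntegrableOn g (Metric.closedBall (0 : E2) δ) :=
  hg.continuousOn.integrableOn_compact (isCompact_closedBall _ _)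

lemma integral_sq_norm {δ : ℝ} (hδ : 0 < δ) :
    ∫ k in Metric.closedBall (0 : E2) δ, ‖k‖ ^ 2 = π * δ ^ 4 / 2 := by
  have hind : ∀ k : E2,
      (Metric.closedBall (0 : E2) δ).indicator (fun k => ‖k‖ ^ 2) k
        = (fun t : ℝ => if t ≤ δ then t ^ 2 else 0) ‖k‖ := by
    intro k
    by_cases h : ‖k‖ ≤ δ <;>
      simp [Set.indicator, Metric.mem_closedBall, dist_zero_right, h]
  rw [← integral_indicator measurableSet_closedBall]
  rw [integral_congr_ae (Filter.Eventually.of_forall hind)]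
  rw [integral_fun_norm_addHaar (volume : Measure E2) (fun t : ℝ => if t ≤ δ then t ^ 2 else 0)]
  have hdim : Module.finrank ℝ E2 = 2 := finrank_euclideanSpace_fin
  rw [hdim]
  have hvol : (volume (Metric.ball (0 : E2) 1)).toReal = π := by
    rw [EuclideanSpace.volume_ball]
    norm_num
    exact Real.sq_sqrt pi_pos.le
  rw [measureReal_def, hvol]
  have hinner : ∫ y in Set.Ioi (0:ℝ), y ^ (2 - 1) • (if y ≤ δ then y ^ 2 else 0)
      = δ ^ 4 / 4 := by
    have h1 : ∀ y : ℝ, y ^ (2 - 1) • (if y ≤ δ then y ^ 2 else 0)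
        = (Set.Iic δ).indicator (fun y => y ^ 3) y := by
      intro y
      by_cases h : y ≤ δ <;> simp [Set.indicator, h] <;> ring
    rw [setIntegral_congr_ae measurableSet_Ioi
      (Filter.Eventually.of_forall (fun y _ => h1 y))]
    rw [setIntegral_indicator measurableSet_Iic, Set.Ioi_inter_Iic,
      ← intervalIntegral.integral_of_le hδ.le, integral_pow]
    norm_num
  rw [hinner]
  simp only [smul_eq_mul, nsmul_eq_mul]
  ring

lemma integral_coord_sq {δ : ℝ} (hδ : 0 < δ) (i : Fin 2) :
    ∫ k in Metric.closedBall (0 : E2) δ, (k i) ^ 2 = π * δ ^ 4 / 4 := by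
  have h01 : ∫ k in Metric.closedBall (0 : E2) δ, (k 0) ^ 2
      = ∫ k in Metric.closedBall (0 : E2) δ, (k 1) ^ 2 := by
    have := setIntegral_comp_isometry swap01 (fun k => (k 1) ^ 2) δ
    simpa [swap01_apply_one] using this
  have hsum : ∫ k in Metric.closedBall (0 : E2) δ, ((k 0) ^ 2 + (k 1) ^ 2)
      = π * δ ^ 4 / 2 := by
    have hn : ∀ k : E2, (k 0) ^ 2 + (k 1) ^ 2 = ‖k‖ ^ 2 := by
      intro k
      rw [EuclideanSpace.norm_eq, Real.sq_sqrt (by positivity)]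
      simp [Fin.sum_univ_two, sq_abs]
    rw [setIntegral_congr_ae measurableSet_closedBall
      (Filter.Eventually.of_forall (fun k _ => hn k)), integral_sq_norm hδ]
  rw [integral_add (f := fun k : E2 => k 0 ^ 2) (g := fun k : E2 => k 1 ^ 2) (show IntegrableOn (fun k : E2 => k 0 ^ 2) (Metric.closedBall (0 : E2) δ) volume from integrableOn_ball ((contin_apply 0).pow 2) δ)
    (show IntegrableOn (fun k : E2 => k 1 ^ 2) (Metric.closedBall (0 : E2) δ) volume from integrableOn_ball ((contin_apply 1).pow 2) δ)] at hsum
  have h0 : ∫ k in Metric.closedBall (0 : E2) δ, (k 0) ^ 2 = π * δ ^ 4 / 4 := by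
    rw [h01] at hsum ⊢
    linarith
  have h1 : ∫ k in Metric.closedBall (0 : E2) δ, (k 1) ^ 2 = π * δ ^ 4 / 4 := by
    rw [← h01]; exact h0
  fin_cases i
  · exact h0
  · exact h1

lemma integral_coord_mul (δ : ℝ) :
    ∫ k in Metric.closedBall (0 : E2) δ, (k 0) * (k 1) = 0 := by
  have h := setIntegral_comp_isometry refl0 (fun k => k 0 * k 1) δ
  simp only [refl0_apply_zero, refl0_apply_one, neg_mul] at h
  rw [integral_neg] at h
  linarith

lemma integral_linear (δ : ℝ) (L : E2 →L[ℝ] ℝ) :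
    ∫ k in Metric.closedBall (0 : E2) δ, L k = 0 := by
  have h := setIntegral_comp_isometry (LinearIsometryEquiv.neg ℝ) (fun k => L k) δ
  simp only [LinearIsometryEquiv.coe_neg, map_neg] at h
  rw [integral_neg] at h
  linarith


lemma taylor_bound (u : E2 → ℝ) (hu : ContDiff ℝ 2 u) (x : E2) {ε : ℝ} (hε : 0 < ε) :
    ∃ r > 0, ∀ h : E2, ‖h‖ < r →
      |u (x + h) - u x - fderiv ℝ u x h
        - (1/2) * fderiv ℝ (fderiv ℝ u) x h h| ≤ ε * ‖h‖ ^ 2 := by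
  have hdu : Differentiable ℝ u := hu.differentiable (by norm_num)
  have hf₁ : ContDiff ℝ 1 (fderiv ℝ u) := hu.fderiv_right (by norm_num)
  set B2 := fderiv ℝ (fderiv ℝ u) x with hB2def
  have hsymm : ∀ v w, B2 v w = B2 w v := fun v w =>
    (hu.contDiffAt.isSymmSndFDerivAt (by norm_num)).eq v w
  have hB : HasFDerivAt (fderiv ℝ u) B2 x := ((hf₁.differentiable (by norm_num)) x).hasFDerivAt
  have hlo := Asymptotics.isLittleO_iff.1 (hasFDerivAt_iff_isLittleO_nhds_zero.1 hB) hε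
  rw [Metric.eventually_nhds_iff] at hlo
  obtain ⟨r, hr, hball⟩ := hlo
  refine ⟨r, hr, fun h hh => ?_⟩
  set φ : E2 → ℝ := fun k => u (x + k) - u x - fderiv ℝ u x k - (1/2) * B2 k k with hφdef
  have hD : ∀ k : E2, HasFDerivAt φ (fderiv ℝ u (x + k) - fderiv ℝ u x - B2 k) k := by
    intro k
    have h1 : HasFDerivAt (fun k : E2 => u (x + k)) (fderiv ℝ u (x + k)) k := by
      have := (hdu (x + k)).hasFDerivAt.comp k ((hasFDerivAt_id k).const_add x)
      simpa [Function.comp_def] using this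
    have h2 : HasFDerivAt (fun k : E2 => B2 k k)
        ((B2 k).comp (ContinuousLinearMap.id ℝ _) + B2.flip k) k :=
      B2.hasFDerivAt.clm_apply (hasFDerivAt_id k)
    have h3 : HasFDerivAt φ
        ((fderiv ℝ u (x + k) - fderiv ℝ u x) -
          (1/2 : ℝ) • ((B2 k).comp (ContinuousLinearMap.id ℝ _) + B2.flip k)) k := by
      simpa [hφdef, Pi.sub_def] using ((h1.sub_const (u x)).sub (fderiv ℝ u x).hasFDerivAt).sub
        (h2.const_mul (1/2 : ℝ))
    convert h3 using 1
    ext v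
    simp only [ContinuousLinearMap.sub_apply, ContinuousLinearMap.smul_apply,
      ContinuousLinearMap.add_apply, ContinuousLinearMap.coe_comp', Function.comp_apply,
      ContinuousLinearMap.coe_id', id_eq, ContinuousLinearMap.flip_apply, smul_eq_mul]
    rw [hsymm v k]
    ring
  have hmean : ‖φ h - φ 0‖ ≤ (ε * ‖h‖) * ‖h - 0‖ := by
    refine Convex.norm_image_sub_le_of_norm_hasFDerivWithin_le
      (s := Metric.closedBall (0 : EuclideanSpace ℝ (Fin 2)) ‖h‖)
      (f' := fun k => fderiv ℝ u (x + k) - fderiv ℝ u x - B2 k)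
      (fun k _ => (hD k).hasFDerivWithinAt) (fun k hk => ?_) (convex_closedBall _ _) ?_ ?_
    ·
      have hk' : ‖k‖ ≤ ‖h‖ := by simpa using hk
      have : ‖fderiv ℝ u (x + k) - fderiv ℝ u x - B2 k‖ ≤ ε * ‖k‖ := by
        have := hball (y := k) (by simpa using lt_of_le_of_lt hk' hh)
        simpa using this
      exact this.trans (by nlinarith [norm_nonneg k, norm_nonneg h])
    · simp
    · simp [Metric.mem_closedBall]
  have hφ0 : φ 0 = 0 := by simp [hφdef]
  rw [hφ0, sub_zero, sub_zero] at hmean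
  calc |φ h| ≤ ε * ‖h‖ * ‖h‖ := hmean
    _ = ε * ‖h‖ ^ 2 := by ring

lemma key_integral (u : E2 → ℝ) (hu : ContDiff ℝ 2 u) (x : E2) {δ : ℝ} (hδ : 0 < δ) :
    ∫ y in Metric.closedBall x δ, (u y - u x)
      = π * δ ^ 4 / 8 *
          (fderiv ℝ (fderiv ℝ u) x (EuclideanSpace.single 0 (1:ℝ)) (EuclideanSpace.single 0 (1:ℝ))
           + fderiv ℝ (fderiv ℝ u) x (EuclideanSpace.single 1 (1:ℝ)) (EuclideanSpace.single 1 (1:ℝ)))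
        + ∫ h in Metric.closedBall (0 : E2) δ,
            (u (x + h) - u x - fderiv ℝ u x h
              - (1/2) * fderiv ℝ (fderiv ℝ u) x h h) := by
  set B2 := fderiv ℝ (fderiv ℝ u) x with hB2def
  set e0 : E2 := EuclideanSpace.single 0 (1:ℝ) with he0
  set e1 : E2 := EuclideanSpace.single 1 (1:ℝ) with he1
  set L := fderiv ℝ u x with hLdef
  have htrans : ∫ y in Metric.closedBall x δ, (u y - u x)
      = ∫ h in Metric.closedBall (0 : E2) δ, (u (x + h) - u x) := by
    have hmp : MeasurePreserving (fun h : E2 => x + h) volume volume :=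
      measurePreserving_add_left volume x
    have hemb : MeasurableEmbedding (fun h : E2 => x + h) :=
      (Homeomorph.addLeft x).measurableEmbedding
    have hpre : (fun h : E2 => x + h) ⁻¹' Metric.closedBall x δ
        = Metric.closedBall (0 : E2) δ := by
      ext h
      simp [Metric.mem_closedBall, dist_eq_norm, add_sub_cancel_left]
    rw [← hmp.setIntegral_preimage_emb hemb (fun y => u y - u x), hpre]
  rw [htrans]
  have hc1 : Continuous fun h : E2 => u (x + h) - u x :=
    (hu.continuous.comp (continuous_const.add continuous_id)).sub continuous_const
  have hcQ : Continuous fun h : E2 => B2 h h := B2.continuous.clm_apply continuous_id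
  have hcg : Continuous fun h : E2 =>
      u (x + h) - u x - L h - (1/2) * B2 h h :=
    (hc1.sub L.continuous).sub (continuous_const.mul hcQ)
  have intL : IntegrableOn (fun h : E2 => L h) (Metric.closedBall (0:E2) δ) :=
    integrableOn_ball L.continuous δ
  have intQ : IntegrableOn (fun h : E2 => (1/2 : ℝ) * B2 h h)
      (Metric.closedBall (0:E2) δ) := integrableOn_ball (continuous_const.mul hcQ) δ
  have intg : IntegrableOn (fun h : E2 => u (x + h) - u x - L h - (1/2) * B2 h h)
      (Metric.closedBall (0:E2) δ) := integrableOn_ball hcg δ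
  have hs1 : ∫ h in Metric.closedBall (0:E2) δ, (u (x + h) - u x)
      = ∫ h in Metric.closedBall (0:E2) δ,
          (L h + ((1/2 : ℝ) * B2 h h + (u (x + h) - u x - L h - (1/2) * B2 h h))) :=
    setIntegral_congr_ae measurableSet_closedBall
      (Filter.Eventually.of_forall fun h _ => by ring)
  have hA := integral_add intQ intg
  have hB := integral_add intL (intQ.add intg)
  simp only [Pi.add_apply] at hB
  rw [hs1, hB, hA, integral_linear δ L]
  have hrep : ∀ h : E2, B2 h h
      = h 0 ^ 2 * B2 e0 e0 + (h 0 * h 1) * (B2 e0 e1 + B2 e1 e0)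
        + h 1 ^ 2 * B2 e1 e1 := by
    intro h
    have hh : h = h 0 • e0 + h 1 • e1 := by
      ext j
      fin_cases j <;>
        simp [he0, he1, PiLp.add_apply, PiLp.smul_apply, EuclideanSpace.single_apply]
    conv_lhs => rw [hh]
    simp only [map_add, _root_.map_smul, ContinuousLinearMap.add_apply,
      ContinuousLinearMap.coe_smul', Pi.smul_apply, ContinuousLinearMap.smul_apply, smul_eq_mul]
    ring
  have hQval : ∫ h in Metric.closedBall (0:E2) δ, (1/2 : ℝ) * B2 h h
      = π * δ ^ 4 / 8 * (B2 e0 e0 + B2 e1 e1) := by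
    rw [integral_const_mul]
    have h2 : ∫ h in Metric.closedBall (0:E2) δ, B2 h h
        = π * δ ^ 4 / 4 * (B2 e0 e0 + B2 e1 e1) := by
      rw [setIntegral_congr_ae measurableSet_closedBall
        (Filter.Eventually.of_forall fun h _ => hrep h)]
      have i00 : IntegrableOn (fun h : E2 => h 0 ^ 2 * B2 e0 e0)
          (Metric.closedBall (0:E2) δ) :=
        integrableOn_ball (((contin_apply 0).pow 2).mul continuous_const) δ
      have i01 : IntegrableOn (fun h : E2 => (h 0 * h 1) * (B2 e0 e1 + B2 e1 e0))
          (Metric.closedBall (0:E2) δ) :=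
        integrableOn_ball (((contin_apply 0).mul (contin_apply 1)).mul continuous_const) δ
      have i11 : IntegrableOn (fun h : E2 => h 1 ^ 2 * B2 e1 e1)
          (Metric.closedBall (0:E2) δ) :=
        integrableOn_ball (((contin_apply 1).pow 2).mul continuous_const) δ
      have j1 := integral_add i00 i01
      have j2 := integral_add (i00.add i01) i11
      simp only [Pi.add_apply] at j2
      rw [j2, j1, integral_mul_const, integral_mul_const, integral_mul_const,
        integral_coord_sq hδ 0, integral_coord_sq hδ 1, integral_coord_mul δ]
      ring
    rw [h2]
    ring
  rw [hQval]
  ring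


end NLapAux

end NLapAux

open NLapAux

/-- The two-dimensional nonlocal Laplacian with constant kernel
`γ₂c(x,y) = 4/(πδ⁴)` for `‖y−x‖ ≤ δ` (and `0` otherwise) converges, as the horizon
`δ → 0⁺`, to the local Laplacian `Δu(x)` for every `C²` function `u` on `ℝ²`.
Here `Δu(x)` is expressed as the sum of the pure second directional derivatives
along the coordinate directions. -/
theorem nonlocal_laplacian_constant_kernel_2d_limit
    (u : EuclideanSpace ℝ (Fin 2) → ℝ) (hu : ContDiff ℝ 2 u)
    (x : EuclideanSpace ℝ (Fin 2)) :
    Tendsto (fun δ : ℝ =>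
        (8 / (π * δ ^ 4)) * ∫ y in Metric.closedBall x δ, (u y - u x))
      (nhdsWithin 0 (Set.Ioi 0))
      (nhds (∑ i : Fin 2, iteratedFDeriv ℝ 2 u x
        ![EuclideanSpace.single i (1 : ℝ), EuclideanSpace.single i (1 : ℝ)])) ∧
    Tendsto (fun δ : ℝ =>
        2 * ∫ y : EuclideanSpace ℝ (Fin 2),
          (if ‖y - x‖ ≤ δ then 4 / (π * δ ^ 4) else 0) * (u y - u x))
      (nhdsWithin 0 (Set.Ioi 0))
      (nhds (∑ i : Fin 2, iteratedFDeriv ℝ 2 u x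
        ![EuclideanSpace.single i (1 : ℝ), EuclideanSpace.single i (1 : ℝ)])) := by
  classical
  set B2 := fderiv ℝ (fderiv ℝ u) x with hB2def
  set g : EuclideanSpace ℝ (Fin 2) → ℝ := fun h =>
      u (x + h) - u x - fderiv ℝ u x h - (1/2) * B2 h h with hgdef
  set T : ℝ := B2 (EuclideanSpace.single 0 (1:ℝ)) (EuclideanSpace.single 0 (1:ℝ))
    + B2 (EuclideanSpace.single 1 (1:ℝ)) (EuclideanSpace.single 1 (1:ℝ)) with hTdef
  have hT : (∑ i : Fin 2, iteratedFDeriv ℝ 2 u x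
        ![EuclideanSpace.single i (1 : ℝ), EuclideanSpace.single i (1 : ℝ)]) = T := by
    rw [Fin.sum_univ_two, iteratedFDeriv_two_apply, iteratedFDeriv_two_apply]
    simp [hTdef, hB2def]
  have hG : Tendsto (fun δ : ℝ => (8 / (π * δ ^ 4)) *
      ∫ h in Metric.closedBall (0 : EuclideanSpace ℝ (Fin 2)) δ, g h)
      (nhdsWithin 0 (Set.Ioi 0)) (nhds 0) := by
    rw [Metric.tendsto_nhdsWithin_nhds]
    intro ε hε
    obtain ⟨r, hr, hrb⟩ := taylor_bound u hu x (show (0:ℝ) < ε/8 by linarith)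
    refine ⟨r, hr, ?_⟩
    intro δ hδs hδr
    have hδ : (0:ℝ) < δ := hδs
    have hδr' : δ < r := by rwa [Real.dist_eq, sub_zero, abs_of_pos hδ] at hδr
    have hbound : |∫ h in Metric.closedBall (0 : EuclideanSpace ℝ (Fin 2)) δ, g h|
        ≤ (ε/8) * (π * δ ^ 4 / 2) := by
      have hle : ∀ h ∈ Metric.closedBall (0 : EuclideanSpace ℝ (Fin 2)) δ,
          ‖g h‖ ≤ (ε/8) * ‖h‖ ^ 2 := by
        intro h hh
        have hhd : ‖h‖ ≤ δ := by
          simpa [Metric.mem_closedBall, dist_zero_right] using hh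
        simpa [hgdef, hB2def] using hrb h (lt_of_le_of_lt hhd hδr')
      have hint : IntegrableOn (fun h : EuclideanSpace ℝ (Fin 2) => (ε/8) * ‖h‖ ^ 2)
          (Metric.closedBall (0 : EuclideanSpace ℝ (Fin 2)) δ) :=
        integrableOn_ball (continuous_const.mul (continuous_norm.pow 2)) δ
      calc |∫ h in Metric.closedBall (0 : EuclideanSpace ℝ (Fin 2)) δ, g h|
          ≤ ∫ h in Metric.closedBall (0 : EuclideanSpace ℝ (Fin 2)) δ, (ε/8) * ‖h‖ ^ 2 :=
            norm_integral_le_of_norm_le hint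
              (ae_restrict_of_forall_mem measurableSet_closedBall hle)
        _ = (ε/8) * (π * δ ^ 4 / 2) := by
            rw [integral_const_mul, integral_sq_norm hδ]
    rw [Real.dist_eq, sub_zero]
    have h8 : (0:ℝ) < 8 / (π * δ ^ 4) := by positivity
    have hfin : |(8 / (π * δ ^ 4)) *
        ∫ h in Metric.closedBall (0 : EuclideanSpace ℝ (Fin 2)) δ, g h| ≤ ε / 2 := by
      rw [abs_mul, abs_of_pos h8]
      have := mul_le_mul_of_nonneg_left hbound h8.le
      refine this.trans (le_of_eq ?_)
      have hπδ : π * δ ^ 4 ≠ 0 := by positivity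
      field_simp
    linarith
  have key : ∀ δ : ℝ, 0 < δ →
      (8 / (π * δ ^ 4)) * ∫ y in Metric.closedBall x δ, (u y - u x)
        = T + (8 / (π * δ ^ 4)) *
            ∫ h in Metric.closedBall (0 : EuclideanSpace ℝ (Fin 2)) δ, g h := by
    intro δ hδ
    rw [key_integral u hu x hδ]
    have hπδ : π * δ ^ 4 ≠ 0 := by positivity
    rw [hgdef, hTdef, hB2def]
    have h8 : 8 / (π * δ ^ 4) * (π * δ ^ 4 / 8) = 1 := by field_simp
    rw [mul_add, ← mul_assoc, h8, one_mul]
  have hfirst : Tendsto (fun δ : ℝ =>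
      (8 / (π * δ ^ 4)) * ∫ y in Metric.closedBall x δ, (u y - u x))
      (nhdsWithin 0 (Set.Ioi 0)) (nhds T) := by
    have h1 : Tendsto (fun δ : ℝ => T + (8 / (π * δ ^ 4)) *
        ∫ h in Metric.closedBall (0 : EuclideanSpace ℝ (Fin 2)) δ, g h)
        (nhdsWithin 0 (Set.Ioi 0)) (nhds (T + 0)) := tendsto_const_nhds.add hG
    rw [add_zero] at h1
    refine h1.congr' ?_
    filter_upwards [self_mem_nhdsWithin] with δ hδ
    exact (key δ hδ).symm
  rw [hT]
  constructor
  · exact hfirst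
  · refine hfirst.congr fun δ => ?_
    have h1 : ∀ y : EuclideanSpace ℝ (Fin 2),
        (if ‖y - x‖ ≤ δ then 4 / (π * δ ^ 4) else 0) * (u y - u x)
          = (Metric.closedBall x δ).indicator
              (fun y => 4 / (π * δ ^ 4) * (u y - u x)) y := by
      intro y
      simp [Set.indicator_apply, Metric.mem_closedBall, dist_eq_norm, ite_mul, zero_mul]
    rw [integral_congr_ae (Filter.Eventually.of_forall h1),
      integral_indicator measurableSet_closedBall, integral_const_mul]
    ring
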